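/- arXiv:0710.1346 — 4 statements merged into one kernel-verified Lean document; each statement's English description precedes it below -/
import Mathlib

section
/- Let N⁰ be a probability measure on ℝ with Stieltjes transform f⁰, σ a probability measure on ℝ with ∫|τ| σ(dτ) < ∞, and c ≥ 0. Suppose N is a non-negative finite measure on ℝ whose Stieltjes transform f satisfies f(z) = f⁰(z − c ∫ τ σ(dτ)/(1 + τ f(z))) for all Im z ≠ 0, where Im f(z)·Im z ≥ 0. Then N(ℝ) = 1, i.e., N is a probability measure. -/
set_option maxHeartbeats 1000000

open Filter Topology


open MeasureTheory

/-- The Stieltjes transform `f_μ(z) = ∫ μ(dλ)/(λ − z)` of a measure on `ℝ`. -/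
noncomputable def stieltjesT (μ : Measure ℝ) (z : ℂ) : ℂ :=
  ∫ t, 1 / ((t : ℂ) - z) ∂μ



lemma kernel_norm_le (z : ℂ) (hz : z.im ≠ 0) (t : ℝ) :
    ‖1 / ((t : ℂ) - z)‖ ≤ 1 / |z.im| := by
  rw [norm_div, norm_one]
  have h1 : |z.im| ≤ ‖(t : ℂ) - z‖ := by
    have : |((t : ℂ) - z).im| ≤ ‖(t : ℂ) - z‖ := Complex.abs_im_le_norm _
    simpa using this
  have h2 : (0:ℝ) < |z.im| := abs_pos.mpr hz
  exact one_div_le_one_div_of_le h2 h1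

lemma kernel_integrable (μ : Measure ℝ) [IsFiniteMeasure μ] (z : ℂ) (hz : z.im ≠ 0) :
    Integrable (fun t : ℝ => 1 / ((t : ℂ) - z)) μ := by
  have hmeas : AEStronglyMeasurable (fun t : ℝ => 1 / ((t : ℂ) - z)) μ := by
    apply Continuous.aestronglyMeasurable
    apply Continuous.div continuous_const (by continuity)
    intro t ht
    apply hz
    have : ((t:ℂ) - z).im = -z.im := by simp
    simpa [this] using congrArg Complex.im ht |>.symm
  exact (integrable_const (1 / |z.im|)).mono' hmeas (Eventually.of_forall (kernel_norm_le z hz))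

lemma stieltjes_im (μ : Measure ℝ) [IsFiniteMeasure μ] (z : ℂ) (hz : z.im ≠ 0) :
    (stieltjesT μ z).im = ∫ t, z.im / ((t - z.re)^2 + z.im^2) ∂μ := by
  rw [stieltjesT, ← RCLike.im_eq_complex_im, ← integral_im (kernel_integrable μ z hz)]
  congr 1
  ext t
  rw [RCLike.im_eq_complex_im, one_div, Complex.inv_im]
  have : Complex.normSq ((t:ℂ) - z) = (t - z.re)^2 + z.im^2 := by
    simp [Complex.normSq_apply]; ring
  rw [this]
  simp

lemma stieltjes_norm_le (μ : Measure ℝ) [IsFiniteMeasure μ] (z : ℂ) (hz : z.im ≠ 0) :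
    ‖stieltjesT μ z‖ ≤ (μ Set.univ).toReal / |z.im| := by
  calc ‖stieltjesT μ z‖ ≤ ∫ t, ‖1 / ((t : ℂ) - z)‖ ∂μ := norm_integral_le_integral_norm _
  _ ≤ ∫ _t, 1 / |z.im| ∂μ := by
      apply integral_mono ((kernel_integrable μ z hz).norm) (integrable_const _)
      exact kernel_norm_le z hz
  _ = (μ Set.univ).toReal / |z.im| := by rw [integral_const]; simp [smul_eq_mul, Measure.real]; ring

lemma key_tendsto (μ : Measure ℝ) [IsFiniteMeasure μ] (a b : ℝ → ℝ)
    (hb' : ∀ᶠ y in atTop, y ≤ b y)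
    (ha : Tendsto (fun y => a y / y) atTop (𝓝 0))
    (hb : Tendsto (fun y => b y / y) atTop (𝓝 1)) :
    Tendsto (fun y => ∫ t, y * b y / ((t - a y)^2 + (b y)^2) ∂μ) atTop
      (𝓝 (μ Set.univ).toReal) := by
  have hev : ∀ᶠ y in atTop, 0 < y ∧ y ≤ b y :=
    (eventually_gt_atTop 0).and hb'
  have hbt : Tendsto b atTop atTop :=
    tendsto_atTop_mono' atTop (by filter_upwards [hb'] with y h using h) tendsto_id
  have key := tendsto_integral_filter_of_dominated_convergence (μ := μ)
    (F := fun y t => y * b y / ((t - a y)^2 + (b y)^2)) (f := fun _ => (1:ℝ))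
    (l := atTop) (fun _ => (1:ℝ))
    (by filter_upwards [hev] with y hy
        apply Continuous.aestronglyMeasurable
        apply continuous_const.div (by continuity)
        intro t
        have hby : 0 < b y := lt_of_lt_of_le hy.1 hy.2
        have : 0 < (t - a y)^2 + (b y)^2 := by positivity
        exact ne_of_gt this)
    (by filter_upwards [hev] with y hy
        apply Eventually.of_forall
        intro t
        have hby : 0 < b y := lt_of_lt_of_le hy.1 hy.2
        have hden : 0 < (t - a y)^2 + (b y)^2 := by positivity
        rw [Real.norm_eq_abs, abs_of_nonneg (div_nonneg (mul_nonneg hy.1.le hby.le) hden.le)]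
        rw [div_le_one hden]
        nlinarith [sq_nonneg (t - a y), hy.1.le, hy.2, sq_nonneg (b y)])
    (integrable_const 1)
    (by
      apply Eventually.of_forall
      intro t
      have hyb : Tendsto (fun y => y / b y) atTop (𝓝 1) := by
        simpa [inv_div] using hb.inv₀ one_ne_zero
      have hab : Tendsto (fun y => a y / b y) atTop (𝓝 0) := by
        have := ha.mul hyb
        rw [zero_mul] at this
        apply this.congr'
        filter_upwards [hev] with y hy
        field_simp
        rw [mul_comm (a y) y, mul_div_mul_left _ _ hy.1.ne']
      have htb : Tendsto (fun y => t / b y) atTop (𝓝 0) :=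
        tendsto_const_nhds.div_atTop hbt
      have hfrac : Tendsto (fun y => (t - a y) / b y) atTop (𝓝 0) := by
        have := htb.sub hab
        rw [sub_zero] at this
        apply this.congr
        intro y
        ring
      have hmain : Tendsto (fun y => (y / b y) * (1 / (((t - a y)/b y)^2 + 1)))
          atTop (𝓝 1) := by
        have h2 : Tendsto (fun y => ((t - a y)/b y)^2 + 1) atTop (𝓝 1) := by
          have := (hfrac.pow 2).add (tendsto_const_nhds (x := (1:ℝ)))
          simpa using this
        have h3 := hyb.mul ((tendsto_const_nhds (α := ℝ) (x := (1:ℝ))).div h2 one_ne_zero)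
        simpa using h3
      apply hmain.congr'
      filter_upwards [hev] with y hy
      have hby : (b y) ≠ 0 := (lt_of_lt_of_le hy.1 hy.2).ne'
      field_simp)
  simpa [Measure.real] using key


lemma poisson_integrable (μ : Measure ℝ) [IsFiniteMeasure μ] (A B : ℝ) (hB : B ≠ 0) :
    Integrable (fun t : ℝ => B / ((t - A)^2 + B^2)) μ := by
  have hden : ∀ t : ℝ, 0 < (t - A)^2 + B^2 := fun t => by positivity
  apply (integrable_const (1 / |B|)).mono'
  · exact (continuous_const.div (by continuity) (fun t => (hden t).ne')).aestronglyMeasurable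
  · apply Eventually.of_forall
    intro t
    rw [Real.norm_eq_abs, abs_div, abs_of_pos (hden t)]
    rw [div_le_div_iff₀ (hden t) (abs_pos.mpr hB)]
    have h1 : B^2 ≤ (t - A)^2 + B^2 := by nlinarith [sq_nonneg (t - A)]
    calc |B| * |B| = B^2 := by rw [← abs_mul, ← sq, abs_of_nonneg (sq_nonneg B)]
    _ ≤ (t - A)^2 + B^2 := h1
    _ ≤ ((t - A)^2 + B^2) * 1 := by ring_nf; exact le_refl _
    _ = 1 * ((t - A)^2 + B^2) := by ring

lemma poisson_pos (μ : Measure ℝ) [IsFiniteMeasure μ] (hμ : μ Set.univ ≠ 0)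
    (A B : ℝ) (hB : 0 < B) :
    0 < ∫ t, B / ((t - A)^2 + B^2) ∂μ := by
  have hpos : ∀ t : ℝ, 0 < B / ((t - A)^2 + B^2) := fun t => by positivity
  rw [integral_pos_iff_support_of_nonneg (fun t => (hpos t).le)
    (poisson_integrable μ A B hB.ne')]
  have hsupp : Function.support (fun t : ℝ => B / ((t - A)^2 + B^2)) = Set.univ := by
    ext t
    simp only [Function.mem_support, Set.mem_univ, iff_true]
    exact (hpos t).ne'
  rw [hsupp]
  exact pos_iff_ne_zero.mpr hμ



lemma im_one_add (τ : ℝ) (F : ℂ) : (1 + ↑τ * F).im = τ * F.im := by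
  simp

lemma ratio_bound1 (F : ℂ) (hF : 0 < F.im) (τ : ℝ) :
    ‖(τ:ℂ) / (1 + ↑τ * F)‖ ≤ 1 / F.im := by
  rcases eq_or_ne τ 0 with h | h
  · simp [h]; positivity
  · have hden : |τ| * F.im ≤ ‖1 + ↑τ * F‖ := by
      have h1 : |(1 + ↑τ * F).im| ≤ ‖1 + ↑τ * F‖ := Complex.abs_im_le_norm _
      rw [im_one_add, abs_mul, abs_of_pos hF] at h1
      simpa using h1
    have hpos : 0 < |τ| * F.im := mul_pos (abs_pos.mpr h) hF
    rw [norm_div, Complex.norm_real, Real.norm_eq_abs]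
    calc |τ| / ‖1 + ↑τ * F‖ ≤ |τ| / (|τ| * F.im) := by gcongr
    _ = 1 / F.im := by field_simp
    _ ≤ 1 / F.im := le_refl _

lemma ratio_bound2 (F : ℂ) (T : ℝ) (hT : 0 < T) (hFn : ‖F‖ ≤ 1 / (2*T))
    (τ : ℝ) (hτ : |τ| ≤ T) : ‖(τ:ℂ) / (1 + ↑τ * F)‖ ≤ 2 * |τ| := by
  have hx : ‖(↑τ : ℂ) * F‖ ≤ 1/2 := by
    rw [norm_mul, Complex.norm_real, Real.norm_eq_abs]
    calc |τ| * ‖F‖ ≤ T * (1/(2*T)) := by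
          apply mul_le_mul hτ hFn (norm_nonneg _) hT.le
    _ = 1/2 := by field_simp
  have hw : (1:ℝ)/2 ≤ ‖1 + ↑τ * F‖ := by
    have h2 : ‖(1:ℂ)‖ ≤ ‖1 + ↑τ * F‖ + ‖(↑τ:ℂ) * F‖ := by
      calc ‖(1:ℂ)‖ = ‖(1 + ↑τ * F) + (-(↑τ * F))‖ := by ring_nf
      _ ≤ ‖1 + ↑τ * F‖ + ‖-(↑τ * F)‖ := norm_add_le _ _
      _ = ‖1 + ↑τ * F‖ + ‖(↑τ:ℂ) * F‖ := by rw [norm_neg]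
    rw [norm_one] at h2
    linarith
  rw [norm_div, Complex.norm_real, Real.norm_eq_abs]
  rw [div_le_iff₀ (by linarith)]
  nlinarith [abs_nonneg τ]

lemma ratio_im_nonpos (F : ℂ) (hF : 0 ≤ F.im) (τ : ℝ) :
    ((τ:ℂ) / (1 + ↑τ * F)).im ≤ 0 := by
  rw [Complex.div_im]
  have h1 : ((τ:ℂ)).im = 0 := by simp
  have h2 : ((τ:ℂ)).re = τ := by simp
  rw [h1, h2, im_one_add]
  have := Complex.normSq_nonneg (1 + ↑τ * F)
  have h3 : 0 ≤ τ * (τ * F.im) := by nlinarith [sq_nonneg τ]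
  have h4 : 0 ≤ τ * (τ * F.im) / Complex.normSq (1 + ↑τ * F) := by positivity
  simp only [zero_mul, zero_div, zero_sub]
  linarith [h4]

lemma S_integrable (σ : Measure ℝ) [IsProbabilityMeasure σ] (F : ℂ) (hF : 0 < F.im) :
    Integrable (fun τ : ℝ => (τ:ℂ) / (1 + ↑τ * F)) σ := by
  apply (integrable_const (1 / F.im)).mono'
  · apply Measurable.aestronglyMeasurable
    fun_prop
  · exact Eventually.of_forall (ratio_bound1 F hF)

lemma S_im_nonpos (σ : Measure ℝ) [IsProbabilityMeasure σ] (F : ℂ) (hF : 0 < F.im) :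
    (∫ τ, (τ:ℂ) / (1 + ↑τ * F) ∂σ).im ≤ 0 := by
  rw [← RCLike.im_eq_complex_im, ← integral_im (S_integrable σ F hF)]
  apply integral_nonpos
  intro τ
  simpa [RCLike.im_eq_complex_im] using ratio_im_nonpos F hF.le τ

lemma S_norm_le (σ : Measure ℝ) [IsProbabilityMeasure σ]
    (hσ : Integrable (fun τ => |τ|) σ) (F : ℂ) (hF : 0 < F.im)
    (T C : ℝ) (hT : 0 < T) (hC : 0 ≤ C) (hFn : ‖F‖ ≤ 1/(2*T)) (hFi : 1/F.im ≤ C) :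
    ‖∫ τ, (τ:ℂ) / (1 + ↑τ * F) ∂σ‖ ≤
      2 * (∫ τ, |τ| ∂σ) + C * (σ {τ : ℝ | T ≤ |τ|}).toReal := by
  have hmeasset : MeasurableSet {τ : ℝ | T ≤ |τ|} :=
    (isClosed_le continuous_const continuous_abs).measurableSet
  set g : ℝ → ℝ := fun τ => 2*|τ| + Set.indicator {τ : ℝ | T ≤ |τ|} (fun _ => C) τ with hg
  have hgint : Integrable g σ := (hσ.const_mul 2).add ((integrable_const C).indicator hmeasset)
  have hgbound : ∀ τ : ℝ, ‖(τ:ℂ) / (1 + ↑τ * F)‖ ≤ g τ := by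
    intro τ
    rcases le_or_gt T (|τ|) with h | h
    · calc ‖(τ:ℂ) / (1 + ↑τ * F)‖ ≤ 1 / F.im := ratio_bound1 F hF τ
      _ ≤ C := hFi
      _ ≤ g τ := by
          rw [hg]
          have : Set.indicator {τ : ℝ | T ≤ |τ|} (fun _ => C) τ = C :=
            Set.indicator_of_mem (show τ ∈ {τ : ℝ | T ≤ |τ|} from h) _
          simp only [this]
          linarith [abs_nonneg τ]
    · calc ‖(τ:ℂ) / (1 + ↑τ * F)‖ ≤ 2 * |τ| := ratio_bound2 F T hT hFn τ h.le
      _ ≤ g τ := by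
          rw [hg]
          have : (0:ℝ) ≤ Set.indicator {τ : ℝ | T ≤ |τ|} (fun _ => C) τ :=
            Set.indicator_nonneg (fun _ _ => hC) _
          simp only []
          linarith
  calc ‖∫ τ, (τ:ℂ) / (1 + ↑τ * F) ∂σ‖ ≤ ∫ τ, ‖(τ:ℂ) / (1 + ↑τ * F)‖ ∂σ :=
        norm_integral_le_integral_norm _
  _ ≤ ∫ τ, g τ ∂σ := integral_mono (S_integrable σ F hF).norm hgint hgbound
  _ = 2 * (∫ τ, |τ| ∂σ) + C * (σ {τ : ℝ | T ≤ |τ|}).toReal := by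
      rw [hg, integral_add (hσ.const_mul 2) ((integrable_const C).indicator hmeasset),
        integral_const_mul, integral_indicator_const _ hmeasset]
      simp [smul_eq_mul, Measure.real]
      ring

noncomputable def auxS (σ N : Measure ℝ) (y : ℝ) : ℂ :=
  ∫ τ, (τ:ℂ) / (1 + ↑τ * stieltjesT N (Complex.I * ↑y)) ∂σ

noncomputable def auxW (σ N : Measure ℝ) (c y : ℝ) : ℂ :=
  Complex.I * ↑y - ↑c * auxS σ N y


/-- If a finite non-negative measure `N` has Stieltjes transform satisfying the
self-consistent (Marchenko–Pastur) equation
`f(z) = f⁰(z − c ∫ τ σ(dτ)/(1 + τ f(z)))`, where `N⁰, σ` are probability measures and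
`∫|τ| σ(dτ) < ∞`, then `N` is a probability measure. -/
theorem self_consistent_equation_total_mass_one
    (N0 σ : Measure ℝ) [IsProbabilityMeasure N0] [IsProbabilityMeasure σ]
    (hσ : Integrable (fun τ => |τ|) σ) (c : ℝ) (hc : 0 ≤ c)
    (N : Measure ℝ) [IsFiniteMeasure N]
    (hsign : ∀ z : ℂ, z.im ≠ 0 → 0 ≤ (stieltjesT N z).im * z.im)
    (heq : ∀ z : ℂ, z.im ≠ 0 →
      stieltjesT N z =
        stieltjesT N0 (z - c * ∫ τ, (τ : ℂ) / (1 + τ * stieltjesT N z) ∂σ)) :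
    N Set.univ = 1 := by
  classical
  -- Step 0 : N is not the zero measure
  have hN0 : N Set.univ ≠ 0 := by
    intro h0
    have hNzero : N = 0 := Measure.measure_univ_eq_zero.mp h0
    have h1 := heq Complex.I (by simp)
    have hfz : stieltjesT N Complex.I = 0 := by simp [stieltjesT, hNzero]
    rw [hfz] at h1
    have hint : (∫ τ : ℝ, (τ:ℂ) / (1 + ↑τ * (0:ℂ)) ∂σ) = ((∫ τ : ℝ, τ ∂σ : ℝ) : ℂ) := by
      simp only [mul_zero, add_zero, div_one]
      exact integral_ofReal
    rw [hint] at h1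
    have hwim : (Complex.I - ↑c * ((∫ τ : ℝ, τ ∂σ : ℝ) : ℂ)).im = 1 := by simp
    have him := stieltjes_im N0 (Complex.I - ↑c * ((∫ τ : ℝ, τ ∂σ : ℝ) : ℂ))
      (by rw [hwim]; norm_num)
    rw [← h1, hwim] at him
    have hpos := poisson_pos N0 (by simp)
      ((Complex.I - ↑c * ((∫ τ : ℝ, τ ∂σ : ℝ) : ℂ)).re) 1 one_pos
    rw [← him] at hpos
    simp at hpos
  set m : ℝ := (N Set.univ).toReal with hm
  have hmpos : 0 < m := ENNReal.toReal_pos hN0 (measure_ne_top N _)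
  have hzim : ∀ y : ℝ, (Complex.I * ↑y).im = y := fun y => by simp
  have hzre : ∀ y : ℝ, (Complex.I * ↑y).re = 0 := fun y => by simp
  -- imaginary part formula
  have hfim : ∀ y : ℝ, 0 < y →
      (stieltjesT N (Complex.I * ↑y)).im = ∫ t, y / ((t - 0)^2 + y^2) ∂N := by
    intro y hy
    rw [stieltjes_im N _ (by rw [hzim]; exact hy.ne')]
    simp only [hzim, hzre]
  have hfimpos : ∀ y : ℝ, 0 < y → 0 < (stieltjesT N (Complex.I * ↑y)).im := by
    intro y hy
    rw [hfim y hy]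
    exact poisson_pos N hN0 0 y hy
  have hfnorm : ∀ y : ℝ, 0 < y → ‖stieltjesT N (Complex.I * ↑y)‖ ≤ m / y := by
    intro y hy
    have := stieltjes_norm_le N (Complex.I * ↑y) (by rw [hzim]; exact hy.ne')
    rwa [hzim, abs_of_pos hy] at this
  -- a compact interval of positive mass
  obtain ⟨R, hR1, hRne⟩ : ∃ R : ℝ, 1 ≤ R ∧ N (Set.Icc (-R) R) ≠ 0 := by
    by_contra h
    push_neg at h
    apply hN0
    have huniv : (Set.univ : Set ℝ) = ⋃ n : ℕ, Set.Icc (-((n:ℝ)+1)) ((n:ℝ)+1) := by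
      ext x
      simp only [Set.mem_univ, Set.mem_iUnion, Set.mem_Icc, true_iff]
      obtain ⟨n, hn⟩ := exists_nat_ge |x|
      have h2 : |x| ≤ (n:ℝ)+1 := by linarith
      have h3 := abs_le.mp h2
      exact ⟨n, h3.1, h3.2⟩
    rw [huniv]
    apply measure_iUnion_null
    intro n
    exact h ((n:ℝ)+1) (by linarith [Nat.cast_nonneg (α := ℝ) n])
  set m' : ℝ := (N (Set.Icc (-R) R)).toReal with hm'
  have hm'pos : 0 < m' := ENNReal.toReal_pos hRne (measure_ne_top N _)
  have hlow : ∀ y : ℝ, R ≤ y → m' / (2*y) ≤ (stieltjesT N (Complex.I * ↑y)).im := by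
    intro y hyR
    have hy0 : 0 < y := lt_of_lt_of_le (by linarith) hyR
    rw [hfim y hy0]
    have step1 : ∫ t in Set.Icc (-R) R, y / ((t - 0)^2 + y^2) ∂N
        ≤ ∫ t, y / ((t - 0)^2 + y^2) ∂N :=
      setIntegral_le_integral (poisson_integrable N 0 y hy0.ne')
        (Eventually.of_forall fun t => by positivity)
    have step2 : (y / (R^2 + y^2)) * m' ≤ ∫ t in Set.Icc (-R) R, y / ((t - 0)^2 + y^2) ∂N := by
      refine le_trans (le_of_eq ?_) (setIntegral_ge_of_const_le (c := y / (R^2 + y^2)) measurableSet_Icc (measure_ne_top N _) ?_ ?_)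
      · simp [Measure.real, hm', smul_eq_mul, mul_comm]
      · intro t ht
        have h1 : (t - 0)^2 + y^2 ≤ R^2 + y^2 := by
          have h2 := sq_le_sq' (by linarith [ht.1]) ht.2
          nlinarith [h2]
        gcongr
      · exact (poisson_integrable N 0 y hy0.ne').integrableOn
    have step3 : m' / (2*y) ≤ (y / (R^2 + y^2)) * m' := by
      have h3 : 1/(2*y) ≤ y/(R^2+y^2) := by
        rw [div_le_div_iff₀ (by positivity) (by positivity)]
        nlinarith
      calc m'/(2*y) = (1/(2*y)) * m' := by ring
      _ ≤ (y/(R^2+y^2)) * m' := mul_le_mul_of_nonneg_right h3 hm'pos.le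
    linarith
  have heq' : ∀ y : ℝ, 0 < y →
      stieltjesT N (Complex.I * ↑y) = stieltjesT N0 (auxW σ N c y) := by
    intro y hy
    have h := heq (Complex.I * ↑y) (by rw [hzim]; exact hy.ne')
    simpa only [auxW, auxS] using h
  have hSim : ∀ y : ℝ, 0 < y → (auxS σ N y).im ≤ 0 := by
    intro y hy
    simp only [auxS]
    exact S_im_nonpos σ _ (hfimpos y hy)
  have hwim : ∀ y : ℝ, (auxW σ N c y).im = y - c * (auxS σ N y).im := by
    intro y
    simp [auxW, Complex.sub_im, Complex.mul_im, hzim]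
  have hwre : ∀ y : ℝ, (auxW σ N c y).re = -(c * (auxS σ N y).re) := by
    intro y
    simp [auxW, Complex.sub_re, Complex.mul_re, hzre]
  have hble : ∀ᶠ y in atTop, y ≤ (auxW σ N c y).im := by
    filter_upwards [eventually_gt_atTop 0] with y hy
    rw [hwim y]
    nlinarith [hSim y hy]
  set M : ℝ := ∫ τ, |τ| ∂σ with hM
  have hMnn : 0 ≤ M := integral_nonneg fun τ => abs_nonneg τ
  have hkey : Tendsto (fun y => c * ‖auxS σ N y‖ / y) atTop (𝓝 0) := by
    rw [Metric.tendsto_nhds]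
    intro ε hε
    have hδpos : 0 < ε * m' / (4 * (c + 1)) :=
      div_pos (mul_pos hε hm'pos) (by linarith)
    set δ : ℝ := ε * m' / (4 * (c + 1)) with hδ
    set T : ℝ := (M + 1) / δ with hT
    have hTpos : 0 < T := div_pos (by linarith) hδpos
    have htail : (σ {τ : ℝ | T ≤ |τ|}).toReal < δ := by
      have h1 := mul_meas_ge_le_integral_of_nonneg (μ := σ) (f := fun τ => |τ|)
        (Eventually.of_forall fun τ => abs_nonneg τ) hσ T
      have h2 : (σ {τ : ℝ | T ≤ |τ|}).toReal ≤ M / T := by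
        rw [le_div_iff₀ hTpos]
        simp only [measureReal_def] at h1
        linarith [h1]
      have h3 : M / T < δ := by
        rw [hT, div_div_eq_mul_div, div_lt_iff₀ (by linarith : (0:ℝ) < M + 1)]
        nlinarith
      linarith
    filter_upwards [eventually_ge_atTop R, eventually_ge_atTop (2*T*(m+1)),
      eventually_gt_atTop ((4*c*M+1)/ε), eventually_gt_atTop 0] with y hyR hyT hyε hy0
    have hfsmall : ‖stieltjesT N (Complex.I * ↑y)‖ ≤ 1/(2*T) := by
      have h4 := hfnorm y hy0
      have h5 : m / y ≤ 1/(2*T) := by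
        rw [div_le_div_iff₀ hy0 (by positivity)]
        nlinarith
      linarith
    have hinv : 1/(stieltjesT N (Complex.I * ↑y)).im ≤ 2*y/m' := by
      have h7 := one_div_le_one_div_of_le (by positivity) (hlow y hyR)
      rwa [one_div_div] at h7
    have hS := S_norm_le σ hσ _ (hfimpos y hy0) T (2*y/m') hTpos (by positivity)
      hfsmall hinv
    rw [Real.dist_eq, sub_zero, abs_of_nonneg (by positivity)]
    have hSy : ‖auxS σ N y‖ ≤ 2*M + (2*y/m') * (σ {τ : ℝ | T ≤ |τ|}).toReal := by
      simpa only [auxS, hM] using hS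
    set t0 : ℝ := (σ {τ : ℝ | T ≤ |τ|}).toReal with ht0
    have ht0nn : 0 ≤ t0 := ENNReal.toReal_nonneg
    have hfinal : c * ‖auxS σ N y‖ / y ≤ 2*c*M/y + (2*c/m') * t0 := by
      have h6 : c * ‖auxS σ N y‖ ≤ c * (2*M + (2*y/m') * t0) :=
        mul_le_mul_of_nonneg_left hSy hc
      calc c * ‖auxS σ N y‖ / y ≤ c * (2*M + (2*y/m') * t0) / y := by
            gcongr
      _ = 2*c*M/y + (2*c/m') * t0 := by
            field_simp
    have hp1 : 2*c*M/y < ε/2 := by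
      rw [div_lt_iff₀ hy0]
      have h8 := mul_lt_mul_of_pos_right hyε hε
      rw [div_mul_cancel₀ _ hε.ne'] at h8
      nlinarith
    have hp2 : (2*c/m') * t0 ≤ ε/2 := by
      have h9 : (2*c/m') * t0 ≤ (2*c/m') * δ :=
        mul_le_mul_of_nonneg_left htail.le (by positivity)
      have h10 : (2*c/m') * δ ≤ ε/2 := by
        rw [hδ]
        have h11 : (2*c/m') * (ε * m' / (4 * (c + 1))) = ε * (c/(c+1)) / 2 := by
          field_simp
          ring
        rw [h11]
        have hcc : c/(c+1) ≤ 1 := by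
          rw [div_le_one (by linarith)]
          linarith
        nlinarith
      linarith
    linarith
  have hA : Tendsto (fun y => (auxW σ N c y).re / y) atTop (𝓝 0) := by
    apply squeeze_zero_norm' ?_ hkey
    filter_upwards [eventually_gt_atTop 0] with y hy
    rw [hwre y, Real.norm_eq_abs, abs_div, abs_of_pos hy, abs_neg, abs_mul,
      abs_of_nonneg hc]
    gcongr
    simpa using Complex.abs_re_le_norm (auxS σ N y)
  have hB : Tendsto (fun y => (auxW σ N c y).im / y) atTop (𝓝 1) := by
    rw [← tendsto_sub_nhds_zero_iff]
    apply squeeze_zero_norm' ?_ hkey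
    filter_upwards [eventually_gt_atTop 0] with y hy
    rw [hwim y]
    have hrw : (y - c * (auxS σ N y).im)/y - 1 = -(c * (auxS σ N y).im)/y := by
      field_simp
      ring
    rw [hrw, Real.norm_eq_abs, abs_div, abs_of_pos hy, abs_neg, abs_mul,
      abs_of_nonneg hc]
    gcongr
    simpa using Complex.abs_im_le_norm (auxS σ N y)
  have hT1 : Tendsto (fun y : ℝ => y * (stieltjesT N (Complex.I * ↑y)).im) atTop (𝓝 m) := by
    have hk := key_tendsto N (fun _ => 0) (fun y => y)
      (Eventually.of_forall fun y => le_rfl)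
      (by simpa [zero_div] using (tendsto_const_nhds : Tendsto (fun _ : ℝ => (0:ℝ)) atTop (𝓝 0)))
      (by
        apply tendsto_const_nhds.congr'
        filter_upwards [eventually_ne_atTop (0:ℝ)] with y hy
        rw [div_self hy])
    rw [← hm] at hk
    apply hk.congr'
    filter_upwards [eventually_gt_atTop 0] with y hy
    rw [hfim y hy, ← integral_const_mul]
    congr 1
    ext t
    ring
  have hT2 : Tendsto (fun y : ℝ => y * (stieltjesT N (Complex.I * ↑y)).im) atTop (𝓝 1) := by
    have hk := key_tendsto N0 (fun y => (auxW σ N c y).re) (fun y => (auxW σ N c y).im)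
      hble hA hB
    rw [measure_univ, ENNReal.toReal_one] at hk
    apply hk.congr'
    filter_upwards [eventually_gt_atTop 0] with y hy
    have hwim0 : (auxW σ N c y).im ≠ 0 := by
      rw [hwim y]
      nlinarith [hSim y hy]
    rw [heq' y hy, stieltjes_im N0 _ hwim0, ← integral_const_mul]
    congr 1
    ext t
    ring
  have hm1 : m = 1 := tendsto_nhds_unique hT1 hT2
  rw [← ENNReal.toReal_eq_one_iff, ← hm]
  exact hm1
end

section
/- Let N⁰ be a probability measure on ℝ with Stieltjes transform f⁰, σ a probability measure on ℝ, and c ≥ 0. Then there is at most one probability measure N whose Stieltjes transform f (analytic on ℂ∖ℝ with Im f(z)·Im z ≥ 0) satisfies f(z) = f⁰(z − c ∫ τ σ(dτ)/(1 + τ f(z))) for all Im z ≠ 0. -/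
open MeasureTheory

open Complex

section Helpers

lemma sub_ne_zero'' {z : ℂ} (hz : z.im ≠ 0) (t : ℝ) : (t:ℂ) - z ≠ 0 := by
  intro h
  apply hz
  have := congrArg Complex.im h
  simpa using this.symm

lemma one_add_ne {g : ℂ} (hg : 0 < g.im) (τ : ℝ) : 1 + (τ:ℂ) * g ≠ 0 := by
  rcases eq_or_ne τ 0 with h | h
  · simp [h]
  · intro hc
    have := congrArg Complex.im hc
    simp at this
    rcases this with h1 | h1
    · exact h h1
    · exact (ne_of_gt hg) h1

lemma cont_one_add {g : ℂ} : Continuous (fun τ : ℝ => 1 + (τ:ℂ) * g) := by continuity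

lemma cont_tau_div {g : ℂ} (hg : 0 < g.im) :
    Continuous (fun τ : ℝ => (τ:ℂ) / (1 + τ * g)) :=
  Continuous.div (by continuity) cont_one_add (one_add_ne hg)

lemma norm_tau_div_le {g : ℂ} (hg : 0 < g.im) (τ : ℝ) : ‖(τ:ℂ) / (1 + τ * g)‖ ≤ (g.im)⁻¹ := by
  rcases eq_or_ne τ 0 with h | h
  · simp [h]
    positivity
  · have hτ : (τ:ℂ) ≠ 0 := by exact_mod_cast h
    have key : (τ:ℂ) / (1 + τ * g) = 1 / (((τ⁻¹ : ℝ):ℂ) + g) := by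
      rw [div_eq_div_iff (one_add_ne hg τ) (by
        intro hc
        have := congrArg Complex.im hc
        simp at this
        exact (ne_of_gt hg) this)]
      push_cast
      field_simp
    rw [key, norm_div, norm_one, div_eq_inv_mul, mul_one]
    apply inv_anti₀ hg
    calc g.im = (((τ⁻¹:ℝ) : ℂ) + g).im := by simp
    _ ≤ |(((τ⁻¹:ℝ) : ℂ) + g).im| := le_abs_self _
    _ ≤ ‖((τ⁻¹:ℝ) : ℂ) + g‖ := Complex.abs_im_le_norm _

lemma integrable_tau_div (σ : Measure ℝ) [IsFiniteMeasure σ] {g : ℂ} (hg : 0 < g.im) :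
    Integrable (fun τ : ℝ => (τ:ℂ) / (1 + τ * g)) σ := by
  apply Integrable.mono' (integrable_const ((g.im)⁻¹))
  · exact (cont_tau_div hg).aestronglyMeasurable
  · filter_upwards with τ using norm_tau_div_le hg τ

lemma im_tau_div (τ : ℝ) (g : ℂ) :
    ((τ:ℂ) / (1 + τ * g)).im = -(τ^2 / Complex.normSq (1 + τ * g)) * g.im := by
  rw [div_eq_mul_inv,
    show ((τ:ℂ) * (1 + τ * g)⁻¹).im = τ * ((1 + (τ:ℂ) * g)⁻¹).im by simp [Complex.mul_im],
    Complex.inv_im]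
  have h1 : (1 + (τ:ℂ) * g).im = τ * g.im := by simp [Complex.mul_im]
  rw [h1]
  field_simp

lemma sq_norm_tau_div (τ : ℝ) (g : ℂ) :
    ‖(τ:ℂ) / (1 + τ * g)‖^2 = τ^2 / Complex.normSq (1 + τ * g) := by
  rw [norm_div, div_pow]
  congr 1
  · rw [Complex.norm_real, Real.norm_eq_abs, _root_.sq_abs]
  · rw [Complex.sq_norm]

lemma cont_q {g : ℂ} (hg : 0 < g.im) :
    Continuous (fun τ : ℝ => τ^2 / Complex.normSq (1 + τ * g)) := by
  apply Continuous.div (by continuity) (Complex.continuous_normSq.comp cont_one_add)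
  intro τ
  exact fun h => one_add_ne hg τ (Complex.normSq_eq_zero.mp h)

lemma integrable_q (σ : Measure ℝ) [IsFiniteMeasure σ] {g : ℂ} (hg : 0 < g.im) :
    Integrable (fun τ : ℝ => τ^2 / Complex.normSq (1 + τ * g)) σ := by
  apply Integrable.mono' (integrable_const (((g.im)⁻¹)^2))
  · exact (cont_q hg).aestronglyMeasurable
  · filter_upwards with τ
    rw [Real.norm_eq_abs, _root_.abs_of_nonneg (div_nonneg (sq_nonneg τ) (Complex.normSq_nonneg _)), ← sq_norm_tau_div]
    have := norm_tau_div_le hg τ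
    have h0 : (0:ℝ) ≤ ‖(τ:ℂ) / (1 + τ * g)‖ := norm_nonneg _
    nlinarith

lemma stieltjesT_integrable (μ : Measure ℝ) [IsFiniteMeasure μ] {z : ℂ} (hz : z.im ≠ 0) :
    Integrable (fun t : ℝ => 1 / ((t:ℂ) - z)) μ := by
  apply Integrable.mono' (integrable_const (|z.im|⁻¹))
  · exact (Continuous.div continuous_const (by continuity) (sub_ne_zero'' hz)).aestronglyMeasurable
  · filter_upwards with t
    rw [norm_div, norm_one, div_eq_inv_mul, mul_one]
    apply inv_anti₀ (abs_pos.mpr hz)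
    calc |z.im| = |((t:ℂ)-z).im| := by simp
    _ ≤ ‖(t:ℂ)-z‖ := Complex.abs_im_le_norm _

lemma im_one_div' (t : ℝ) (z : ℂ) : (1/((t:ℂ)-z)).im = z.im / Complex.normSq ((t:ℂ)-z) := by
  rw [div_eq_inv_mul, mul_one, Complex.inv_im]
  simp [neg_div]

lemma integrable_im_kernel (μ : Measure ℝ) [IsFiniteMeasure μ] {z : ℂ} (hz : z.im ≠ 0) :
    Integrable (fun t : ℝ => z.im / Complex.normSq ((t:ℂ) - z)) μ := by
  have := (stieltjesT_integrable μ hz).im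
  apply this.congr
  filter_upwards with t
  rw [← im_one_div' t z]; rfl

lemma stieltjesT_im (μ : Measure ℝ) [IsFiniteMeasure μ] {z : ℂ} (hz : z.im ≠ 0) :
    (stieltjesT μ z).im = ∫ t, z.im / Complex.normSq ((t:ℂ) - z) ∂μ := by
  have h := integral_im (𝕜 := ℂ) (stieltjesT_integrable μ hz)
  rw [stieltjesT]
  rw [show (∫ t, 1 / ((t:ℂ) - z) ∂μ).im = RCLike.im (∫ t, 1 / ((t:ℂ) - z) ∂μ) from rfl, ← h]
  congr 1; ext t
  rw [show RCLike.im (1/((t:ℂ)-z)) = (1/((t:ℂ)-z)).im from rfl, im_one_div' t z]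

lemma stieltjesT_im_pos (μ : Measure ℝ) [IsProbabilityMeasure μ] {z : ℂ} (hz : 0 < z.im) :
    0 < (stieltjesT μ z).im := by
  rw [stieltjesT_im μ (ne_of_gt hz)]
  have hpos : ∀ t : ℝ, 0 < z.im / Complex.normSq ((t:ℂ) - z) := fun t =>
    div_pos hz (Complex.normSq_pos.mpr (sub_ne_zero'' (ne_of_gt hz) t))
  rw [integral_pos_iff_support_of_nonneg (fun t => (hpos t).le)
    (integrable_im_kernel μ (ne_of_gt hz))]
  have : (Function.support fun t : ℝ => z.im / Complex.normSq ((t:ℂ) - z)) = Set.univ := by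
    ext t; simpa [Function.mem_support] using (hpos t).ne'
  rw [this]
  simp

end Helpers

section Facts
variable (N0 σ : Measure ℝ) [IsProbabilityMeasure N0] [IsProbabilityMeasure σ]

lemma B_pos (μ : Measure ℝ) [IsProbabilityMeasure μ] {w : ℂ} (hw : 0 < w.im) :
    0 < ∫ t, 1 / Complex.normSq ((t:ℂ) - w) ∂μ := by
  have hint : Integrable (fun t : ℝ => 1 / Complex.normSq ((t:ℂ) - w)) μ := by
    have h := (integrable_im_kernel μ (ne_of_gt hw)).const_mul (w.im)⁻¹
    apply h.congr
    filter_upwards with t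
    field_simp
  have hpos : ∀ t : ℝ, 0 < 1 / Complex.normSq ((t:ℂ) - w) := fun t =>
    div_pos one_pos (Complex.normSq_pos.mpr (sub_ne_zero'' (ne_of_gt hw) t))
  rw [integral_pos_iff_support_of_nonneg (fun t => (hpos t).le) hint]
  have : (Function.support fun t : ℝ => 1 / Complex.normSq ((t:ℂ) - w)) = Set.univ := by
    ext t; simpa [Function.mem_support] using (hpos t).ne'
  rw [this]
  simp

lemma solution_facts (c : ℝ) (hc : 0 ≤ c) (μ : Measure ℝ) [IsProbabilityMeasure μ]
    {z : ℂ} (hz : 0 < z.im)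
    (hμ : stieltjesT μ z =
      stieltjesT N0 (z - c * ∫ τ, (τ:ℂ) / (1 + τ * stieltjesT μ z) ∂σ))
    (f w : ℂ) (Q B : ℝ)
    (hfd : f = stieltjesT μ z)
    (hwd : w = z - c * ∫ τ, (τ:ℂ) / (1 + τ * f) ∂σ)
    (hQd : Q = ∫ τ, τ^2 / Complex.normSq (1 + τ * f) ∂σ)
    (hBd : B = ∫ t, 1 / Complex.normSq ((t:ℂ) - w) ∂N0) :
    0 < f.im ∧ 0 ≤ Q ∧ w.im = z.im + c * Q * f.im ∧ 0 < B ∧ f.im = w.im * B ∧ c * Q * B < 1 := by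
  have hf : 0 < f.im := hfd ▸ stieltjesT_im_pos μ hz
  have hQ0 : 0 ≤ Q := by
    rw [hQd]
    exact integral_nonneg fun τ => div_nonneg (sq_nonneg τ) (Complex.normSq_nonneg _)
  -- imaginary part of the sigma integral
  have hIim : (∫ τ, (τ:ℂ) / (1 + τ * f) ∂σ).im = -Q * f.im := by
    have h1 := integral_im (𝕜 := ℂ) (μ := σ) (integrable_tau_div σ hf)
    rw [show (∫ τ, (τ:ℂ) / (1 + τ * f) ∂σ).im
        = RCLike.im (∫ τ, (τ:ℂ) / (1 + τ * f) ∂σ) from rfl, ← h1]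
    have h2 : ∀ τ : ℝ, RCLike.im ((τ:ℂ) / (1 + τ * f))
        = (-(τ^2 / Complex.normSq (1 + τ * f))) * f.im := fun τ => im_tau_div τ f
    calc ∫ τ, RCLike.im ((τ:ℂ) / (1 + τ * f)) ∂σ
        = ∫ τ, (-(τ^2 / Complex.normSq (1 + τ * f))) * f.im ∂σ := by
          exact integral_congr_ae (Filter.Eventually.of_forall h2)
      _ = (∫ τ, -(τ^2 / Complex.normSq (1 + τ * f)) ∂σ) * f.im := by
          rw [integral_mul_const]
      _ = -Q * f.im := by rw [integral_neg, hQd]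
  have hwim : w.im = z.im + c * Q * f.im := by
    rw [hwd]
    simp only [Complex.sub_im, Complex.mul_im, Complex.ofReal_re, Complex.ofReal_im]
    rw [hIim]
    ring
  have hwpos : 0 < w.im := by
    rw [hwim]; positivity
  have hB : 0 < B := hBd ▸ B_pos N0 hwpos
  have hfB : f.im = w.im * B := by
    rw [hfd, hμ, ← hfd, ← hwd, stieltjesT_im N0 (ne_of_gt hwpos), hBd]
    rw [← integral_const_mul]
    congr 1; ext t
    field_simp
  refine ⟨hf, hQ0, hwim, hB, hfB, ?_⟩
  have hfB' : f.im = (z.im + c * Q * f.im) * B := by rw [← hwim]; exact hfB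
  have : f.im * (1 - c * Q * B) = z.im * B := by linear_combination hfB'
  nlinarith [hz, hB, hf]

end Facts

section CS
variable {α : Type*} [MeasurableSpace α]

lemma integral_cs (μ : Measure α) [IsFiniteMeasure μ] {u v : α → ℝ}
    (hu : AEStronglyMeasurable u μ) (hv : AEStronglyMeasurable v μ)
    (hu0 : ∀ x, 0 ≤ u x) (hv0 : ∀ x, 0 ≤ v x)
    {Cu Cv : ℝ} (hub : ∀ x, u x ≤ Cu) (hvb : ∀ x, v x ≤ Cv) :
    ∫ x, u x * v x ∂μ ≤ Real.sqrt (∫ x, u x ^ 2 ∂μ) * Real.sqrt (∫ x, v x ^ 2 ∂μ) := by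
  have hpq : Real.HolderConjugate 2 2 := Real.HolderConjugate.two_two
  have hmu : MemLp u (ENNReal.ofReal 2) μ :=
    (memLp_top_of_bound hu Cu (Filter.Eventually.of_forall fun x => by
      rw [Real.norm_eq_abs, _root_.abs_of_nonneg (hu0 x)]; exact hub x)).mono_exponent
      le_top
  have hmv : MemLp v (ENNReal.ofReal 2) μ :=
    (memLp_top_of_bound hv Cv (Filter.Eventually.of_forall fun x => by
      rw [Real.norm_eq_abs, _root_.abs_of_nonneg (hv0 x)]; exact hvb x)).mono_exponent
      le_top
  have h := MeasureTheory.integral_mul_le_Lp_mul_Lq_of_nonneg hpq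
    (Filter.Eventually.of_forall hu0) (Filter.Eventually.of_forall hv0) hmu hmv
  calc ∫ x, u x * v x ∂μ
      ≤ (∫ x, u x ^ (2:ℝ) ∂μ) ^ ((1:ℝ)/2) * (∫ x, v x ^ (2:ℝ) ∂μ) ^ ((1:ℝ)/2) := h
    _ = Real.sqrt (∫ x, u x ^ 2 ∂μ) * Real.sqrt (∫ x, v x ^ 2 ∂μ) := by
        rw [Real.sqrt_eq_rpow, Real.sqrt_eq_rpow]
        congr 2 <;> · apply integral_congr_ae
                      filter_upwards with x
                      rw [show ((2:ℝ) = ((2:ℕ):ℝ)) by norm_num, Real.rpow_natCast]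

end CS

section Main
variable (N0 σ : Measure ℝ) [IsProbabilityMeasure N0] [IsProbabilityMeasure σ]

lemma stieltjes_eq_upper (c : ℝ) (hc : 0 ≤ c)
    (N N' : Measure ℝ) [IsProbabilityMeasure N] [IsProbabilityMeasure N']
    (heq : ∀ z : ℂ, z.im ≠ 0 →
      stieltjesT N z =
        stieltjesT N0 (z - c * ∫ τ, (τ : ℂ) / (1 + τ * stieltjesT N z) ∂σ))
    (heq' : ∀ z : ℂ, z.im ≠ 0 →
      stieltjesT N' z =
        stieltjesT N0 (z - c * ∫ τ, (τ : ℂ) / (1 + τ * stieltjesT N' z) ∂σ))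
    {z : ℂ} (hz : 0 < z.im) : stieltjesT N z = stieltjesT N' z := by
  by_contra hne0
  obtain ⟨f, hfd⟩ : ∃ f : ℂ, f = stieltjesT N z := ⟨_, rfl⟩
  obtain ⟨f', hfd'⟩ : ∃ f' : ℂ, f' = stieltjesT N' z := ⟨_, rfl⟩
  have hne : f ≠ f' := by rw [hfd, hfd']; exact hne0
  obtain ⟨w, hwd⟩ : ∃ w : ℂ, w = z - c * ∫ τ, (τ : ℂ) / (1 + τ * f) ∂σ := ⟨_, rfl⟩
  obtain ⟨w', hwd'⟩ : ∃ w' : ℂ, w' = z - c * ∫ τ, (τ : ℂ) / (1 + τ * f') ∂σ := ⟨_, rfl⟩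
  obtain ⟨Q, hQd⟩ : ∃ Q : ℝ, Q = ∫ τ, τ^2 / Complex.normSq (1 + τ * f) ∂σ := ⟨_, rfl⟩
  obtain ⟨Q', hQd'⟩ : ∃ Q' : ℝ, Q' = ∫ τ, τ^2 / Complex.normSq (1 + τ * f') ∂σ := ⟨_, rfl⟩
  obtain ⟨B, hBd⟩ : ∃ B : ℝ, B = ∫ t, 1 / Complex.normSq ((t:ℂ) - w) ∂N0 := ⟨_, rfl⟩
  obtain ⟨B', hBd'⟩ : ∃ B' : ℝ, B' = ∫ t, 1 / Complex.normSq ((t:ℂ) - w') ∂N0 := ⟨_, rfl⟩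
  obtain ⟨hfim, hQ0, hwim, hB, hfB, hkey⟩ :=
    solution_facts N0 σ c hc N hz (heq z (ne_of_gt hz)) f w Q B hfd hwd hQd hBd
  obtain ⟨hfim', hQ0', hwim', hB', hfB', hkey'⟩ :=
    solution_facts N0 σ c hc N' hz (heq' z (ne_of_gt hz)) f' w' Q' B' hfd' hwd' hQd' hBd'
  have hwpos : 0 < w.im := by rw [hwim]; positivity
  have hwpos' : 0 < w'.im := by rw [hwim']; positivity
  obtain ⟨E, hEd⟩ : ∃ E : ℂ, E = ∫ τ, (τ:ℂ)^2 / ((1 + τ * f) * (1 + τ * f')) ∂σ := ⟨_, rfl⟩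
  obtain ⟨D, hDd⟩ : ∃ D : ℂ, D = ∫ t, 1 / (((t:ℂ) - w) * ((t:ℂ) - w')) ∂N0 := ⟨_, rfl⟩
  have pe : ∀ τ : ℝ, (τ:ℂ)^2 / ((1 + τ * f) * (1 + τ * f'))
      = ((τ:ℂ) / (1 + τ * f)) * ((τ:ℂ) / (1 + τ * f')) := by
    intro τ; rw [div_mul_div_comm, ← pow_two]
  have pd : ∀ t : ℝ, (1:ℂ) / (((t:ℂ) - w) * ((t:ℂ) - w'))
      = (1 / ((t:ℂ) - w)) * (1 / ((t:ℂ) - w')) := by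
    intro t; rw [div_mul_div_comm, one_mul]
  have norm_one_div_le : ∀ (v : ℂ), 0 < v.im → ∀ t : ℝ, ‖(1:ℂ) / ((t:ℂ) - v)‖ ≤ (v.im)⁻¹ := by
    intro v hv t
    rw [norm_div, norm_one, div_eq_inv_mul, mul_one]
    apply inv_anti₀ hv
    have him : ((t:ℂ) - v).im = -v.im := by simp
    calc v.im = |((t:ℂ) - v).im| := by rw [him, abs_neg, _root_.abs_of_nonneg hv.le]
    _ ≤ ‖(t:ℂ) - v‖ := Complex.abs_im_le_norm _
  have hEint : Integrable (fun τ : ℝ => (τ:ℂ)^2 / ((1 + τ * f) * (1 + τ * f'))) σ := by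
    apply Integrable.mono' (integrable_const ((f.im)⁻¹ * (f'.im)⁻¹))
    · exact (Continuous.div (Complex.continuous_ofReal.pow 2) (cont_one_add.mul cont_one_add)
        (fun τ => mul_ne_zero (one_add_ne hfim τ) (one_add_ne hfim' τ))).aestronglyMeasurable
    · filter_upwards with τ
      rw [pe τ, norm_mul]
      exact mul_le_mul (norm_tau_div_le hfim τ) (norm_tau_div_le hfim' τ) (norm_nonneg _)
        (inv_nonneg.mpr hfim.le)
  have hDint : Integrable (fun t : ℝ => (1:ℂ) / (((t:ℂ) - w) * ((t:ℂ) - w'))) N0 := by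
    apply Integrable.mono' (integrable_const ((w.im)⁻¹ * (w'.im)⁻¹))
    · exact (Continuous.div continuous_const
        ((Complex.continuous_ofReal.sub continuous_const).mul
          (Complex.continuous_ofReal.sub continuous_const))
        (fun t => mul_ne_zero (sub_ne_zero'' (ne_of_gt hwpos) t)
          (sub_ne_zero'' (ne_of_gt hwpos') t))).aestronglyMeasurable
    · filter_upwards with t
      rw [pd t, norm_mul]
      exact mul_le_mul (norm_one_div_le w hwpos t) (norm_one_div_le w' hwpos' t) (norm_nonneg _)
        (inv_nonneg.mpr hwpos.le)
  have hIsub : (∫ τ, (τ:ℂ) / (1 + τ * f) ∂σ) - (∫ τ, (τ:ℂ) / (1 + τ * f') ∂σ)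
      = (f' - f) * E := by
    rw [← integral_sub (integrable_tau_div σ hfim) (integrable_tau_div σ hfim'), hEd,
      ← integral_const_mul]
    apply integral_congr_ae
    filter_upwards with τ
    have ha := one_add_ne hfim τ
    have hb := one_add_ne hfim' τ
    field_simp
    ring
  have hwsub : w - w' = c * (f - f') * E := by
    rw [hwd, hwd']
    rw [show z - ↑c * (∫ τ, (τ:ℂ) / (1 + τ * f) ∂σ) - (z - ↑c * ∫ τ, (τ:ℂ) / (1 + τ * f') ∂σ)
      = -(↑c) * ((∫ τ, (τ:ℂ) / (1 + τ * f) ∂σ) - ∫ τ, (τ:ℂ) / (1 + τ * f') ∂σ) by ring, hIsub]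
    ring
  have hfsub : f - f' = (w - w') * D := by
    rw [hfd, hfd', heq z (ne_of_gt hz), heq' z (ne_of_gt hz), ← hfd, ← hfd', ← hwd, ← hwd']
    rw [stieltjesT, stieltjesT,
      ← integral_sub (stieltjesT_integrable N0 (ne_of_gt hwpos))
        (stieltjesT_integrable N0 (ne_of_gt hwpos')), hDd, ← integral_const_mul]
    apply integral_congr_ae
    filter_upwards with t
    have ha := sub_ne_zero'' (ne_of_gt hwpos) t
    have hb := sub_ne_zero'' (ne_of_gt hwpos') t
    field_simp
    try ring
  have hone : (1:ℂ) = ↑c * E * D := by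
    have hsub : f - f' ≠ 0 := sub_ne_zero.mpr hne
    have hmm : (f - f') * 1 = (f - f') * (↑c * E * D) := by
      rw [mul_one]
      calc f - f' = (w - w') * D := hfsub
        _ = (↑c * (f - f') * E) * D := by rw [← hwsub]
        _ = (f - f') * (↑c * E * D) := by ring
    exact mul_left_cancel₀ hsub hmm
  have hEnorm : ‖E‖ ≤ Real.sqrt Q * Real.sqrt Q' := by
    rw [hEd]
    calc ‖∫ τ, (τ:ℂ)^2 / ((1 + τ * f) * (1 + τ * f')) ∂σ‖
        ≤ ∫ τ, ‖(τ:ℂ)^2 / ((1 + τ * f) * (1 + τ * f'))‖ ∂σ :=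
          norm_integral_le_integral_norm _
      _ = ∫ τ, ‖(τ:ℂ) / (1 + τ * f)‖ * ‖(τ:ℂ) / (1 + τ * f')‖ ∂σ := by
          apply integral_congr_ae
          filter_upwards with τ
          rw [pe τ, norm_mul]
      _ ≤ Real.sqrt (∫ τ, ‖(τ:ℂ) / (1 + τ * f)‖^2 ∂σ) *
          Real.sqrt (∫ τ, ‖(τ:ℂ) / (1 + τ * f')‖^2 ∂σ) := by
          apply integral_cs σ ((cont_tau_div hfim).norm.aestronglyMeasurable)
            ((cont_tau_div hfim').norm.aestronglyMeasurable)
            (fun τ => norm_nonneg _) (fun τ => norm_nonneg _)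
            (norm_tau_div_le hfim) (norm_tau_div_le hfim')
      _ = Real.sqrt Q * Real.sqrt Q' := by
          rw [hQd, hQd']
          congr 2 <;> · apply integral_congr_ae
                        filter_upwards with τ
                        rw [sq_norm_tau_div]
  have sq_norm_one_div : ∀ (v : ℂ) (t : ℝ),
      ‖(1:ℂ) / ((t:ℂ) - v)‖^2 = 1 / Complex.normSq ((t:ℂ) - v) := by
    intro v t
    rw [norm_div, div_pow, norm_one, one_pow, Complex.sq_norm]
  have hDnorm : ‖D‖ ≤ Real.sqrt B * Real.sqrt B' := by
    rw [hDd]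
    calc ‖∫ t, (1:ℂ) / (((t:ℂ) - w) * ((t:ℂ) - w')) ∂N0‖
        ≤ ∫ t, ‖(1:ℂ) / (((t:ℂ) - w) * ((t:ℂ) - w'))‖ ∂N0 :=
          norm_integral_le_integral_norm _
      _ = ∫ t, ‖(1:ℂ) / ((t:ℂ) - w)‖ * ‖(1:ℂ) / ((t:ℂ) - w')‖ ∂N0 := by
          apply integral_congr_ae
          filter_upwards with t
          rw [pd t, norm_mul]
      _ ≤ Real.sqrt (∫ t, ‖(1:ℂ) / ((t:ℂ) - w)‖^2 ∂N0) *
          Real.sqrt (∫ t, ‖(1:ℂ) / ((t:ℂ) - w')‖^2 ∂N0) := by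
          apply integral_cs N0
            ((Continuous.div continuous_const (Complex.continuous_ofReal.sub continuous_const)
              (sub_ne_zero'' (ne_of_gt hwpos))).norm.aestronglyMeasurable)
            ((Continuous.div continuous_const (Complex.continuous_ofReal.sub continuous_const)
              (sub_ne_zero'' (ne_of_gt hwpos'))).norm.aestronglyMeasurable)
            (fun t => norm_nonneg _) (fun t => norm_nonneg _)
            (norm_one_div_le w hwpos) (norm_one_div_le w' hwpos')
      _ = Real.sqrt B * Real.sqrt B' := by
          rw [hBd, hBd']
          congr 2 <;> · apply integral_congr_ae
                        filter_upwards with t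
                        rw [sq_norm_one_div]
  have h1le : (1:ℝ) ≤ c * (Real.sqrt Q * Real.sqrt Q') * (Real.sqrt B * Real.sqrt B') := by
    have habs := congrArg (fun x : ℂ => ‖x‖) hone
    simp only [norm_one, norm_mul, Complex.norm_real, Real.norm_eq_abs, _root_.abs_of_nonneg hc] at habs
    rw [habs]
    have hEnorm' : ‖E‖ ≤ Real.sqrt Q * Real.sqrt Q' := by
      exact hEnorm
    have hDnorm' : ‖D‖ ≤ Real.sqrt B * Real.sqrt B' := by
      exact hDnorm
    have hED : ‖E‖ * ‖D‖
        ≤ (Real.sqrt Q * Real.sqrt Q') * (Real.sqrt B * Real.sqrt B') :=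
      mul_le_mul hEnorm' hDnorm' (norm_nonneg _) (by positivity)
    calc c * ‖E‖ * ‖D‖ = c * (‖E‖ * ‖D‖) := by ring
      _ ≤ c * ((Real.sqrt Q * Real.sqrt Q') * (Real.sqrt B * Real.sqrt B')) :=
          mul_le_mul_of_nonneg_left hED hc
      _ = c * (Real.sqrt Q * Real.sqrt Q') * (Real.sqrt B * Real.sqrt B') := by ring
  have hsq : (c * (Real.sqrt Q * Real.sqrt Q') * (Real.sqrt B * Real.sqrt B'))^2
      = (c * Q * B) * (c * Q' * B') := by
    rw [mul_pow, mul_pow, mul_pow, mul_pow, Real.sq_sqrt hQ0, Real.sq_sqrt hQ0',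
      Real.sq_sqrt hB.le, Real.sq_sqrt hB'.le]
    ring
  nlinarith [hkey, hkey', h1le, hsq, mul_nonneg (mul_nonneg hc hQ0) hB.le,
    mul_nonneg (mul_nonneg hc hQ0') hB'.le]

end Main

section Inversion
open Filter Topology

lemma cauchy_kernel_cont {ε : ℝ} (hε : 0 < ε) (t : ℝ) :
    Continuous (fun x : ℝ => ε / ((x - t)^2 + ε^2)) := by
  apply continuous_const.div (by continuity)
  intro x
  positivity

lemma integrable_cauchy {ε : ℝ} (hε : 0 < ε) (t : ℝ) :
    Integrable (fun x : ℝ => ε / ((x - t)^2 + ε^2)) := by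
  have h0 : Integrable (fun y : ℝ => (1 + y^2)⁻¹) := integrable_inv_one_add_sq
  have h1 : Integrable (fun y : ℝ => ε⁻¹ * (1 + (ε⁻¹ * y)^2)⁻¹) := by
    have := (h0.comp_mul_left' (inv_ne_zero hε.ne')).const_mul ε⁻¹
    simpa using this
  have h2 : Integrable (fun x : ℝ => ε⁻¹ * (1 + (ε⁻¹ * (x - t))^2)⁻¹) := h1.comp_sub_right t
  apply h2.congr
  filter_upwards with x
  field_simp
  ring

lemma integral_cauchy {ε : ℝ} (hε : 0 < ε) (t : ℝ) :
    ∫ x : ℝ, ε / ((x - t)^2 + ε^2) = Real.pi := by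
  have key : ∀ x : ℝ, ε / ((x - t)^2 + ε^2) = ε⁻¹ * (1 + (ε⁻¹ * (x - t))^2)⁻¹ := by
    intro x; field_simp; ring
  simp_rw [key]
  rw [show (∫ x : ℝ, ε⁻¹ * (1 + (ε⁻¹ * (x - t))^2)⁻¹)
    = ∫ x : ℝ, (fun y : ℝ => ε⁻¹ * (1 + (ε⁻¹ * y)^2)⁻¹) (x - t) from rfl,
    integral_sub_right_eq_self (fun y : ℝ => ε⁻¹ * (1 + (ε⁻¹ * y)^2)⁻¹) t]
  rw [integral_const_mul, show (∫ y : ℝ, (1 + (ε⁻¹ * y)^2)⁻¹)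
    = ∫ y : ℝ, (fun u : ℝ => (1 + u^2)⁻¹) (ε⁻¹ * y) from rfl,
    Measure.integral_comp_mul_left (fun u : ℝ => (1 + u^2)⁻¹) ε⁻¹,
    integral_univ_inv_one_add_sq]
  simp [smul_eq_mul, abs_of_pos hε]
  field_simp

lemma stieltjesT_im_eq_S (μ : Measure ℝ) [IsProbabilityMeasure μ] {ε : ℝ} (hε : 0 < ε) (x : ℝ) :
    (stieltjesT μ ((x:ℂ) + ε * Complex.I)).im = ∫ t, ε / ((x - t)^2 + ε^2) ∂μ := by
  have him : ((x:ℂ) + ε * Complex.I).im = ε := by simp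
  rw [stieltjesT_im μ (by rw [him]; exact hε.ne')]
  apply integral_congr_ae
  filter_upwards with t
  rw [him]
  congr 1
  rw [Complex.normSq_apply]
  simp [Complex.sub_re, Complex.sub_im]
  ring

end Inversion

section Inv2
open Filter Topology BoundedContinuousFunction

variable {μ : Measure ℝ} [IsProbabilityMeasure μ]

-- the smoothed integral, for φ bounded continuous
lemma g_rep (φ : ℝ →ᵇ ℝ) {ε : ℝ} (hε : 0 < ε) (t : ℝ) :
    (∫ x, φ x * (ε / ((x - t)^2 + ε^2)))
      = ∫ u, φ (ε*u + t) * (1 + u^2)⁻¹ := by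
  have h1 : (∫ x, φ x * (ε / ((x - t)^2 + ε^2)))
      = ∫ y, φ (y + t) * (ε / (y^2 + ε^2)) := by
    rw [← integral_sub_right_eq_self (fun y => φ (y + t) * (ε / (y^2 + ε^2))) t]
    apply integral_congr_ae
    filter_upwards with x
    simp
  have h2 := Measure.integral_comp_mul_left (fun y => φ (y + t) * (ε / (y^2 + ε^2))) ε
  rw [show |ε⁻¹| = ε⁻¹ from abs_of_pos (inv_pos.mpr hε), smul_eq_mul] at h2
  have h3 : (∫ y, φ (y + t) * (ε / (y^2 + ε^2)))
      = ε * ∫ x, φ (ε * x + t) * (ε / ((ε*x)^2 + ε^2)) := by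
    rw [h2]; rw [← mul_assoc, mul_inv_cancel₀ hε.ne', one_mul]
  rw [h1, h3, ← integral_const_mul]
  apply integral_congr_ae
  filter_upwards with u
  have : (ε*u)^2 + ε^2 = ε^2 * (1 + u^2) := by ring
  rw [this]
  field_simp

lemma g_bound (φ : ℝ →ᵇ ℝ) {ε : ℝ} (hε : 0 < ε) (t : ℝ) :
    ‖∫ x, φ x * (ε / ((x - t)^2 + ε^2))‖ ≤ Real.pi * ‖φ‖ := by
  have hint : Integrable (fun x => φ x * (ε / ((x - t)^2 + ε^2))) := by
    apply Integrable.mono' ((integrable_cauchy hε t).const_mul ‖φ‖)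
    · exact (φ.continuous.mul (cauchy_kernel_cont hε t)).aestronglyMeasurable
    · filter_upwards with x
      rw [norm_mul, Real.norm_eq_abs (ε / _), _root_.abs_of_nonneg (by positivity)]
      exact mul_le_mul_of_nonneg_right (φ.norm_coe_le_norm x) (by positivity)
  calc ‖∫ x, φ x * (ε / ((x - t)^2 + ε^2))‖
      ≤ ∫ x, ‖φ x * (ε / ((x - t)^2 + ε^2))‖ := norm_integral_le_integral_norm _
    _ ≤ ∫ x, ‖φ‖ * (ε / ((x - t)^2 + ε^2)) := by
        apply integral_mono hint.norm ((integrable_cauchy hε t).const_mul ‖φ‖)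
        intro x
        dsimp only
        rw [norm_mul, Real.norm_eq_abs (ε / _), _root_.abs_of_nonneg (by positivity)]
        exact mul_le_mul_of_nonneg_right (φ.norm_coe_le_norm x) (by positivity)
    _ = Real.pi * ‖φ‖ := by
        rw [integral_const_mul, integral_cauchy hε t, mul_comm]

lemma g_tendsto (φ : ℝ →ᵇ ℝ) (t : ℝ) :
    Tendsto (fun n : ℕ => ∫ x, φ x * ((1/(n+1:ℝ)) / ((x - t)^2 + (1/(n+1:ℝ))^2)))
      atTop (𝓝 (Real.pi * φ t)) := by
  have hεn : ∀ n : ℕ, (0:ℝ) < 1/(n+1:ℝ) := fun n => by positivity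
  have hrep : ∀ n : ℕ, (∫ x, φ x * ((1/(n+1:ℝ)) / ((x - t)^2 + (1/(n+1:ℝ))^2)))
      = ∫ u, φ ((1/(n+1:ℝ))*u + t) * (1 + u^2)⁻¹ := fun n => g_rep φ (hεn n) t
  simp_rw [hrep]
  have hlim : Real.pi * φ t = ∫ u : ℝ, φ t * (1 + u^2)⁻¹ := by
    rw [integral_const_mul, integral_univ_inv_one_add_sq, mul_comm]
  rw [hlim]
  apply tendsto_integral_of_dominated_convergence (fun u => ‖φ‖ * (1 + u^2)⁻¹)
  · intro n
    have hker : Continuous fun u : ℝ => (1 + u^2)⁻¹ :=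
      Continuous.inv₀ (by continuity) (fun u => by positivity)
    exact ((φ.continuous.comp (by continuity)).mul hker).aestronglyMeasurable
  · exact integrable_inv_one_add_sq.const_mul ‖φ‖
  · intro n
    filter_upwards with u
    rw [norm_mul, Real.norm_eq_abs ((1+u^2)⁻¹), _root_.abs_of_nonneg (by positivity)]
    exact mul_le_mul_of_nonneg_right (φ.norm_coe_le_norm _) (by positivity)
  · filter_upwards with u
    apply Tendsto.mul_const
    apply (φ.continuous.tendsto t).comp
    have h0 : Tendsto (fun n : ℕ => (1/(n+1:ℝ))) atTop (𝓝 0) :=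
      tendsto_one_div_add_atTop_nhds_zero_nat
    have := (h0.mul_const u).add_const t
    simpa using this

lemma prod_integrable (φ : ℝ →ᵇ ℝ) {ε : ℝ} (hε : 0 < ε) :
    Integrable (fun p : ℝ × ℝ => φ p.2 * (ε / ((p.2 - p.1)^2 + ε^2))) (μ.prod volume) := by
  have hcont : Continuous (fun p : ℝ × ℝ => φ p.2 * (ε / ((p.2 - p.1)^2 + ε^2))) := by
    apply (φ.continuous.comp continuous_snd).mul
    apply continuous_const.div (by continuity)
    intro p
    positivity
  rw [integrable_prod_iff hcont.aestronglyMeasurable]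
  constructor
  · filter_upwards with t
    apply Integrable.mono' ((integrable_cauchy hε t).const_mul ‖φ‖)
    · exact (φ.continuous.mul (cauchy_kernel_cont hε t)).aestronglyMeasurable
    · filter_upwards with x
      rw [norm_mul, Real.norm_eq_abs (ε / _), _root_.abs_of_nonneg (by positivity)]
      exact mul_le_mul_of_nonneg_right (φ.norm_coe_le_norm x) (by positivity)
  · apply Integrable.mono' (integrable_const (Real.pi * ‖φ‖))
    · exact hcont.aestronglyMeasurable.norm.integral_prod_right'
    · filter_upwards with t
      rw [Real.norm_eq_abs, _root_.abs_of_nonneg (integral_nonneg (fun x => norm_nonneg _))]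
      have hint : Integrable (fun x => φ x * (ε / ((x - t)^2 + ε^2))) := by
        apply Integrable.mono' ((integrable_cauchy hε t).const_mul ‖φ‖)
        · exact (φ.continuous.mul (cauchy_kernel_cont hε t)).aestronglyMeasurable
        · filter_upwards with x
          rw [norm_mul, Real.norm_eq_abs (ε / _), _root_.abs_of_nonneg (by positivity)]
          exact mul_le_mul_of_nonneg_right (φ.norm_coe_le_norm x) (by positivity)
      calc ∫ x, ‖φ x * (ε / ((x - t)^2 + ε^2))‖
          ≤ ∫ x, ‖φ‖ * (ε / ((x - t)^2 + ε^2)) := by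
            apply integral_mono hint.norm ((integrable_cauchy hε t).const_mul ‖φ‖)
            intro x
            dsimp only
            rw [norm_mul, Real.norm_eq_abs (ε / _), _root_.abs_of_nonneg (by positivity)]
            exact mul_le_mul_of_nonneg_right (φ.norm_coe_le_norm x) (by positivity)
        _ = Real.pi * ‖φ‖ := by rw [integral_const_mul, integral_cauchy hε t, mul_comm]

lemma J_swap (φ : ℝ →ᵇ ℝ) {ε : ℝ} (hε : 0 < ε) :
    (∫ t, (∫ x, φ x * (ε / ((x - t)^2 + ε^2))) ∂μ)
      = ∫ x, φ x * (∫ t, ε / ((x - t)^2 + ε^2) ∂μ) := by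
  have h := integral_integral_swap
    (f := fun (t : ℝ) (x : ℝ) => φ x * (ε / ((x - t)^2 + ε^2)))
    (μ := μ) (ν := volume) (prod_integrable φ hε)
  rw [h]
  apply integral_congr_ae
  filter_upwards with x
  rw [integral_const_mul]

lemma J_tendsto (φ : ℝ →ᵇ ℝ) :
    Tendsto (fun n : ℕ => ∫ t, (∫ x, φ x *
        ((1/(n+1:ℝ)) / ((x - t)^2 + (1/(n+1:ℝ))^2))) ∂μ)
      atTop (𝓝 (Real.pi * ∫ t, φ t ∂μ)) := by
  have hεn : ∀ n : ℕ, (0:ℝ) < 1/(n+1:ℝ) := fun n => by positivity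
  rw [show Real.pi * ∫ t, φ t ∂μ = ∫ t, Real.pi * φ t ∂μ by rw [integral_const_mul]]
  apply tendsto_integral_of_dominated_convergence (fun _ => Real.pi * ‖φ‖)
  · intro n
    exact ((prod_integrable φ (hεn n)).integral_prod_left).aestronglyMeasurable
  · exact integrable_const _
  · intro n
    filter_upwards with t using g_bound φ (hεn n) t
  · filter_upwards with t using g_tendsto φ t

end Inv2

section Final
open Filter Topology BoundedContinuousFunction
open scoped NNReal ENNReal

lemma measure_eq_of_S_eq (N N' : Measure ℝ) [IsProbabilityMeasure N] [IsProbabilityMeasure N']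
    (hS : ∀ ε : ℝ, 0 < ε → ∀ x : ℝ,
      (∫ t, ε / ((x - t)^2 + ε^2) ∂N) = ∫ t, ε / ((x - t)^2 + ε^2) ∂N') :
    N = N' := by
  have main : ∀ φ : ℝ →ᵇ ℝ, (∫ t, φ t ∂N) = ∫ t, φ t ∂N' := by
    intro φ
    have hεn : ∀ n : ℕ, (0:ℝ) < 1/(n+1:ℝ) := fun n => by positivity
    have hJeq : ∀ n : ℕ,
        (∫ t, (∫ x, φ x * ((1/(n+1:ℝ)) / ((x - t)^2 + (1/(n+1:ℝ))^2))) ∂N)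
          = ∫ t, (∫ x, φ x * ((1/(n+1:ℝ)) / ((x - t)^2 + (1/(n+1:ℝ))^2))) ∂N' := by
      intro n
      rw [J_swap φ (hεn n), J_swap φ (hεn n)]
      apply integral_congr_ae
      filter_upwards with x
      rw [hS _ (hεn n) x]
    have h1 := J_tendsto (μ := N) φ
    have h2 := J_tendsto (μ := N') φ
    simp_rw [hJeq] at h1
    have := tendsto_nhds_unique h1 h2
    have hπ : Real.pi ≠ 0 := Real.pi_ne_zero
    exact mul_left_cancel₀ hπ this
  apply ext_of_forall_lintegral_eq_of_IsFiniteMeasure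
  intro f
  have hiso : Isometry ((↑) : ℝ≥0 → ℝ) := fun _ _ => rfl
  set φr : ℝ →ᵇ ℝ := BoundedContinuousFunction.comp _ hiso.lipschitz f with hφr
  have hmain := main φr
  have e1 : (∫⁻ x, (f x : ℝ≥0∞) ∂N).toReal = ∫ x, (f x : ℝ) ∂N :=
    f.toReal_lintegral_coe_eq_integral N
  have e2 : (∫⁻ x, (f x : ℝ≥0∞) ∂N').toReal = ∫ x, (f x : ℝ) ∂N' :=
    f.toReal_lintegral_coe_eq_integral N'
  have hfin1 : (∫⁻ x, (f x : ℝ≥0∞) ∂N) ≠ ⊤ := (f.lintegral_lt_top_of_nnreal N).ne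
  have hfin2 : (∫⁻ x, (f x : ℝ≥0∞) ∂N') ≠ ⊤ := (f.lintegral_lt_top_of_nnreal N').ne
  apply (ENNReal.toReal_eq_toReal_iff' hfin1 hfin2).mp
  rw [e1, e2]
  exact hmain

end Final

/-- There is at most one probability measure `N` whose Stieltjes transform satisfies
the Marchenko–Pastur self-consistent equation
`f(z) = f⁰(z − c ∫ τ σ(dτ)/(1 + τ f(z)))` for all `Im z ≠ 0`. -/
theorem self_consistent_equation_unique
    (N0 σ : Measure ℝ) [IsProbabilityMeasure N0] [IsProbabilityMeasure σ]
    (c : ℝ) (hc : 0 ≤ c)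
    (N N' : Measure ℝ) [IsProbabilityMeasure N] [IsProbabilityMeasure N']
    (heq : ∀ z : ℂ, z.im ≠ 0 →
      stieltjesT N z =
        stieltjesT N0 (z - c * ∫ τ, (τ : ℂ) / (1 + τ * stieltjesT N z) ∂σ))
    (heq' : ∀ z : ℂ, z.im ≠ 0 →
      stieltjesT N' z =
        stieltjesT N0 (z - c * ∫ τ, (τ : ℂ) / (1 + τ * stieltjesT N' z) ∂σ)) :
    N = N' := by
  apply measure_eq_of_S_eq
  intro ε hε x
  rw [← stieltjesT_im_eq_S N hε x, ← stieltjesT_im_eq_S N' hε x]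
  congr 1
  apply stieltjes_eq_upper N0 σ c hc N N' heq heq'
  simp [hε]
end

section
/- Let f be the Stieltjes transform of a finite non-negative measure N on ℝ with N ≠ 0, and σ a probability measure on ℝ such that 1 + τ f(z) ≠ 0 for σ-a.e. τ and Im z ≠ 0. Define ζ(z) = −c ∫ τ σ(dτ)/(1 + τ f(z)) for c ≥ 0. Then Im(z + ζ(z)) has the same sign as Im z and |Im(z + ζ(z))| ≥ |Im z| for Im z ≠ 0. -/
open MeasureTheory

lemma cintegral_im {α : Type*} {m : MeasurableSpace α} {μ : Measure α} {f : α → ℂ}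
    (hf : Integrable f μ) : (∫ x, f x ∂μ).im = ∫ x, (f x).im ∂μ := by
  rw [← RCLike.im_eq_complex_im, ← integral_im hf]

lemma stieltjesT_im_mul_nonneg (N : Measure ℝ) (z : ℂ) :
    0 ≤ (stieltjesT N z).im * z.im := by
  unfold stieltjesT
  by_cases h : Integrable (fun t : ℝ => 1 / ((t : ℂ) - z)) N
  · rw [cintegral_im h, ← integral_mul_const]
    apply integral_nonneg
    intro t
    dsimp only
    have : (1 / ((t : ℂ) - z)).im = z.im / Complex.normSq ((t : ℂ) - z) := by
      rw [one_div, Complex.inv_im]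
      simp [Complex.sub_im]
    rw [this, div_mul_eq_mul_div]
    exact div_nonneg (mul_self_nonneg _) (Complex.normSq_nonneg _)
  · rw [integral_undef h]; simp

/-- For `ζ(z) = −c ∫ τ σ(dτ)/(1 + τ f(z))` with `f` the Stieltjes transform of a
nonzero finite non-negative measure, `Im (z + ζ(z))` has the same sign as `Im z` and
`|Im (z + ζ(z))| ≥ |Im z|`. -/
theorem shifted_argument_im_ge
    (N : Measure ℝ) [IsFiniteMeasure N] (hN : N ≠ 0)
    (σ : Measure ℝ) [IsProbabilityMeasure σ] (c : ℝ) (hc : 0 ≤ c)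
    (hden : ∀ z : ℂ, z.im ≠ 0 → ∀ᵐ (τ : ℝ) ∂σ, 1 + (τ : ℂ) * stieltjesT N z ≠ 0) :
    ∀ z : ℂ, z.im ≠ 0 →
      0 < (z + -(c : ℂ) * ∫ τ, (τ : ℂ) / (1 + τ * stieltjesT N z) ∂σ).im * z.im ∧
      |z.im| ≤ |(z + -(c : ℂ) * ∫ τ, (τ : ℂ) / (1 + τ * stieltjesT N z) ∂σ).im| := by
  intro z hz
  set f := stieltjesT N z with hf
  set I := ∫ τ, (τ : ℂ) / (1 + τ * f) ∂σ with hI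
  have hfz : 0 ≤ f.im * z.im := stieltjesT_im_mul_nonneg N z
  -- key claim : I.im * z.im ≤ 0
  have hkey : I.im * z.im ≤ 0 := by
    by_cases hInt : Integrable (fun τ : ℝ => (τ : ℂ) / (1 + τ * f)) σ
    · rw [hI, cintegral_im hInt, ← integral_mul_const]
      apply integral_nonpos_of_ae
      filter_upwards [hden z hz] with τ hτ
      have him : ((τ : ℂ) / (1 + τ * f)).im =
          -(τ * (τ * f.im)) / Complex.normSq (1 + τ * f) := by
        rw [div_eq_mul_inv, Complex.mul_im, Complex.inv_im, Complex.inv_re]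
        simp [Complex.add_im, Complex.mul_im, mul_div_assoc, mul_comm]
        ring
      rw [him, div_mul_eq_mul_div]
      apply div_nonpos_of_nonpos_of_nonneg _ (Complex.normSq_nonneg _)
      nlinarith [sq_nonneg τ, mul_self_nonneg τ]
    · have : I = 0 := by rw [hI, integral_undef hInt]
      rw [this]; simp
  have him : (z + -(c : ℂ) * I).im = z.im + -c * I.im := by
    simp [Complex.add_im, Complex.mul_im]
  rw [him]
  have h1 : 0 ≤ (-c * I.im) * z.im := by nlinarith
  constructor
  · nlinarith [mul_self_pos.mpr hz]
  · rw [← Real.sqrt_sq_eq_abs, ← Real.sqrt_sq_eq_abs]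
    apply Real.sqrt_le_sqrt
    nlinarith
end

section
/- Let f be the Stieltjes transform of a nonzero finite non-negative measure N on ℝ, and ζ(iy) = −c ∫ τ σ(dτ)/(1 + τ f(iy)) with σ a probability measure and c ≥ 0. Then lim_{y→∞} ζ(iy)/y = 0. -/
open MeasureTheory Filter

lemma aux_ne_zero {y t : ℝ} (hy : 0 < y) : (t : ℂ) - y * Complex.I ≠ 0 := by
  intro h
  have : ((t : ℂ) - y * Complex.I).im = -y := by simp
  rw [h] at this
  simp at this
  linarith

lemma aux_norm_le {y t : ℝ} (hy : 0 < y) : ‖1 / ((t:ℂ) - y * Complex.I)‖ ≤ 1 / y := by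
  rw [norm_div, norm_one]
  apply one_div_le_one_div_of_le hy
  calc y = |((t:ℂ) - y * Complex.I).im| := by simp [abs_of_pos hy]
    _ ≤ ‖(t:ℂ) - y * Complex.I‖ := Complex.abs_im_le_norm _
    _ = ‖(t:ℂ) - y * Complex.I‖ := rfl

lemma aux_integrable (N : Measure ℝ) [IsFiniteMeasure N] {y : ℝ} (hy : 0 < y) :
    Integrable (fun t : ℝ => 1 / ((t:ℂ) - y * Complex.I)) N := by
  refine (integrable_const (1/y)).mono' ?_ (.of_forall fun t => aux_norm_le hy)
  exact (Continuous.div continuous_const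
    (Complex.continuous_ofReal.sub continuous_const) fun t => aux_ne_zero hy).aestronglyMeasurable

lemma aux_norm_stieltjes (N : Measure ℝ) [IsFiniteMeasure N] {y : ℝ} (hy : 0 < y) :
    ‖stieltjesT N (y * Complex.I)‖ ≤ (N Set.univ).toReal / y := by
  have := norm_integral_le_of_norm_le_const (μ := N)
    (f := fun t : ℝ => 1 / ((t:ℂ) - y * Complex.I)) (C := 1/y)
    (.of_forall fun t => aux_norm_le hy)
  calc ‖stieltjesT N (y * Complex.I)‖ ≤ 1/y * (N Set.univ).toReal := this
    _ = (N Set.univ).toReal / y := by ring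

lemma aux_im (N : Measure ℝ) [IsFiniteMeasure N] {y : ℝ} (hy : 0 < y) :
    (stieltjesT N (y * Complex.I)).im = ∫ t, y / (t^2 + y^2) ∂N := by
  rw [stieltjesT,
    show (∫ t, 1/((t:ℂ) - y*Complex.I) ∂N).im
      = RCLike.im (∫ t, 1/((t:ℂ) - y*Complex.I) ∂N) from rfl,
    ← integral_im (aux_integrable N hy)]
  congr 1
  funext t
  rw [one_div, show RCLike.im ((t:ℂ) - y*Complex.I)⁻¹ = (((t:ℂ) - y*Complex.I)⁻¹).im from rfl,
    Complex.inv_im]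
  simp [Complex.normSq_apply]
  ring

lemma aux_exists_R (N : Measure ℝ) [IsFiniteMeasure N] (hN : N ≠ 0) :
    ∃ R : ℝ, 1 ≤ R ∧ 0 < (N (Set.Icc (-R) R)).toReal := by
  by_contra h
  push_neg at h
  have h0 : ∀ n : ℕ, N (Set.Icc (-(n+1 : ℝ)) (n+1 : ℝ)) = 0 := by
    intro n
    have h1 : (1:ℝ) ≤ (n:ℝ) + 1 := by norm_num [Nat.cast_nonneg]
    have := h _ h1
    have hfin : N (Set.Icc (-(n+1 : ℝ)) (n+1 : ℝ)) ≠ ⊤ := measure_ne_top N _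
    have := (ENNReal.toReal_eq_zero_iff _).mp (le_antisymm this ENNReal.toReal_nonneg)
    tauto
  have huniv : N Set.univ ≤ 0 := by
    have hsub : Set.univ ⊆ ⋃ n : ℕ, Set.Icc (-(n+1 : ℝ)) (n+1 : ℝ) := by
      intro x _
      obtain ⟨n, hn⟩ := exists_nat_ge |x|
      exact Set.mem_iUnion.2 ⟨n, by constructor <;> [linarith [neg_abs_le x]; linarith [le_abs_self x]]⟩
    calc N Set.univ ≤ N (⋃ n : ℕ, Set.Icc (-(n+1 : ℝ)) (n+1 : ℝ)) := measure_mono hsub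
      _ ≤ ∑' n : ℕ, N (Set.Icc (-(n+1 : ℝ)) (n+1 : ℝ)) := measure_iUnion_le _
      _ = 0 := by
          refine ENNReal.tsum_eq_zero |>.mpr fun n => ?_
          exact h0 n
  exact hN (Measure.measure_univ_eq_zero.mp (le_antisymm huniv (zero_le)))

lemma aux_im_ge (N : Measure ℝ) [IsFiniteMeasure N] {R y : ℝ} (hR : 1 ≤ R) (hy : R ≤ y) :
    (N (Set.Icc (-R) R)).toReal / (2 * y) ≤ (stieltjesT N (y * Complex.I)).im := by
  have hy0 : 0 < y := lt_of_lt_of_le (by linarith) hy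
  rw [aux_im N hy0]
  have hint : Integrable (fun t : ℝ => y / (t^2 + y^2)) N := by
    refine (integrable_const (1/y)).mono' ?_ (.of_forall fun t => ?_)
    · exact (Continuous.div continuous_const (by continuity)
        (fun t => by positivity)).aestronglyMeasurable
    · rw [Real.norm_eq_abs, abs_of_nonneg (by positivity)]
      rw [div_le_div_iff₀ (by positivity) hy0]
      nlinarith [sq_nonneg t]
  have hstep : (1 / (2*y)) * (N (Set.Icc (-R) R)).toReal
      ≤ ∫ t in Set.Icc (-R) R, y / (t^2 + y^2) ∂N := by
    rw [mul_comm, ← smul_eq_mul, ← Measure.real_def]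
    apply setIntegral_ge_of_const_le measurableSet_Icc (measure_ne_top N _)
    · intro t ht
      rw [div_le_div_iff₀ (by positivity) (by positivity)]
      have ht1 : t^2 ≤ R^2 := sq_le_sq' ht.1 ht.2
      nlinarith
    · exact hint.integrableOn
  calc (N (Set.Icc (-R) R)).toReal / (2*y) = (1/(2*y)) * (N (Set.Icc (-R) R)).toReal := by ring
    _ ≤ ∫ t in Set.Icc (-R) R, y / (t^2 + y^2) ∂N := hstep
    _ ≤ ∫ t, y / (t^2 + y^2) ∂N :=
        setIntegral_le_integral hint (.of_forall fun t => by positivity)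

/-- For `ζ(iy) = −c ∫ τ σ(dτ)/(1 + τ f(iy))` with `f` the Stieltjes transform of a
nonzero finite non-negative measure `N` and `σ` a probability measure,
`ζ(iy)/y → 0` as `y → ∞`. -/
theorem shift_term_littleo
    (N : Measure ℝ) [IsFiniteMeasure N] (hN : N ≠ 0)
    (σ : Measure ℝ) [IsProbabilityMeasure σ] (c : ℝ) (hc : 0 ≤ c) :
    Tendsto (fun y : ℝ =>
        (-(c : ℂ) * ∫ τ, (τ : ℂ) / (1 + τ * stieltjesT N (y * Complex.I)) ∂σ) / (y : ℂ))
      atTop (nhds 0) := by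
  obtain ⟨R, hR1, hm⟩ := aux_exists_R N hN
  set m := (N (Set.Icc (-R) R)).toReal with hmdef
  set M := (N Set.univ).toReal with hMdef
  have hf0 : Tendsto (fun y : ℝ => stieltjesT N (y * Complex.I)) atTop (nhds 0) := by
    have hg : Tendsto (fun y : ℝ => M / y) atTop (nhds 0) :=
      Tendsto.div_atTop tendsto_const_nhds tendsto_id
    refine squeeze_zero_norm' ?_ hg
    filter_upwards [eventually_gt_atTop 0] with y hy
    exact aux_norm_stieltjes N hy
  have key : ∀ y : ℝ,
      (-(c : ℂ) * ∫ τ, (τ : ℂ) / (1 + τ * stieltjesT N (y * Complex.I)) ∂σ) / (y : ℂ)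
      = ∫ τ, (-(c : ℂ) * ((τ : ℂ) / (1 + τ * stieltjesT N (y * Complex.I)))) / (y : ℂ) ∂σ := by
    intro y
    rw [integral_div, integral_const_mul]
  simp only [key]
  have h0 : (0 : ℂ) = ∫ _ : ℝ, (0:ℂ) ∂σ := by simp
  rw [h0]
  apply tendsto_integral_filter_of_dominated_convergence (bound := fun _ => 2 * c / m)
  · -- measurability
    filter_upwards [eventually_ge_atTop R] with y hy
    have hy0 : 0 < y := lt_of_lt_of_le (by linarith) hy
    have him : m / (2 * y) ≤ (stieltjesT N (y * Complex.I)).im := aux_im_ge N hR1 hy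
    have him0 : 0 < (stieltjesT N (y * Complex.I)).im :=
      lt_of_lt_of_le (by positivity) him
    have hne : ∀ τ : ℝ, 1 + (τ:ℂ) * stieltjesT N (y * Complex.I) ≠ 0 := by
      intro τ h
      have h1 : (1 + (τ:ℂ) * stieltjesT N (y * Complex.I)).im
          = τ * (stieltjesT N (y * Complex.I)).im := by simp
      have h2 : (1 + (τ:ℂ) * stieltjesT N (y * Complex.I)).re
          = 1 + τ * (stieltjesT N (y * Complex.I)).re := by simp
      rw [h] at h1 h2
      simp only [Complex.zero_im, Complex.zero_re] at h1 h2
      rcases mul_eq_zero.mp h1.symm with h3 | h3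
      · rw [h3] at h2; simp at h2
      · exact absurd h3 (ne_of_gt him0)
    exact (((continuous_const.mul (Complex.continuous_ofReal.div
      (continuous_const.add (Complex.continuous_ofReal.mul continuous_const)) hne)).div_const
      _)).aestronglyMeasurable
  · -- bound
    filter_upwards [eventually_ge_atTop R] with y hy
    have hy0 : 0 < y := lt_of_lt_of_le (by linarith) hy
    have him : m / (2 * y) ≤ (stieltjesT N (y * Complex.I)).im := aux_im_ge N hR1 hy
    have him0 : 0 < (stieltjesT N (y * Complex.I)).im :=
      lt_of_lt_of_le (by positivity) him
    refine .of_forall fun τ => ?_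
    set f := stieltjesT N (y * Complex.I)
    have hnorm : ‖-(c:ℂ) * ((τ:ℂ) / (1 + τ * f)) / (y:ℂ)‖
        = c * ‖(τ:ℂ) / (1 + τ * f)‖ / y := by
      rw [norm_div, norm_mul, norm_neg, Complex.norm_real, Complex.norm_real,
        Real.norm_eq_abs, Real.norm_eq_abs, abs_of_nonneg hc, abs_of_pos hy0]
    rw [hnorm]
    have hkey : ‖(τ:ℂ) / (1 + τ * f)‖ ≤ 2 * y / m := by
      by_cases hτ : τ = 0
      · subst hτ; simp; positivity
      · have hτ' : 0 < |τ| := abs_pos.mpr hτ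
        have hden : |τ| * (m / (2 * y)) ≤ ‖1 + (τ:ℂ) * f‖ := by
          calc |τ| * (m / (2 * y)) ≤ |τ| * f.im :=
                mul_le_mul_of_nonneg_left him (abs_nonneg τ)
            _ = |((1 + (τ:ℂ) * f).im)| := by
                have him' : (1 + (τ:ℂ) * f).im = τ * f.im := by simp
                rw [him', abs_mul, abs_of_pos him0]
            _ ≤ ‖1 + (τ:ℂ) * f‖ := Complex.abs_im_le_norm _
            _ = ‖1 + (τ:ℂ) * f‖ := rfl
        rw [norm_div, Complex.norm_real, Real.norm_eq_abs]
        calc |τ| / ‖1 + (τ:ℂ) * f‖ ≤ |τ| / (|τ| * (m / (2 * y))) := by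
              apply div_le_div_of_nonneg_left (abs_nonneg τ) (by positivity) hden
            _ = 2 * y / m := by field_simp
    calc c * ‖(τ:ℂ) / (1 + τ * f)‖ / y ≤ c * (2 * y / m) / y := by gcongr
      _ = 2 * c / m := by field_simp
  · exact integrable_const _
  · refine .of_forall fun τ => ?_
    have hden : Tendsto (fun y : ℝ => 1 + (τ:ℂ) * stieltjesT N (y * Complex.I)) atTop
        (nhds 1) := by
      have := tendsto_const_nhds (x := (τ:ℂ)) (f := atTop (α := ℝ)) |>.mul hf0
      simpa using tendsto_const_nhds.add this
    have h1 : Tendsto (fun y : ℝ => -(c:ℂ) * ((τ:ℂ) / (1 + τ * stieltjesT N (y * Complex.I))))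
        atTop (nhds (-(c:ℂ) * τ)) := by
      have := (tendsto_const_nhds (x := -(c:ℂ)) (f := atTop (α := ℝ))).mul
        ((tendsto_const_nhds (x := (τ:ℂ))).div hden one_ne_zero)
      simpa using this
    have h2 : Tendsto (fun y : ℝ => ((y:ℂ))⁻¹) atTop (nhds 0) := by
      have := (Complex.continuous_ofReal.tendsto 0).comp
        (tendsto_inv_atTop_zero (𝕜 := ℝ))
      simpa [Function.comp_def, Complex.ofReal_inv] using this
    simpa [div_eq_mul_inv] using h1.mul h2
end
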